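/- Non-meromorphic zeta function from a logarithmic weight: the Dirichlet series ζ(s) := ∑_{n=2}^∞ n^{−2s}/log(n), which converges and is holomorphic for Re(s) > 1/2, satisfies ζ'(s) = 2 − 2·ζ_R(2s) on Re(s) > 1/2 (where ζ_R is the Riemann zeta function), and hence ζ(s) = −log(2s − 1) + f(s) for an entire function f; in particular ζ does not admit a meromorphic extension to any neighbourhood of s = 1/2. -/

import Mathlib

open Filter

/-- The Dirichlet series `ζ_a(s) = ∑_{n=2}^∞ n^{-2s} / log n`. -/
noncomputable def zetaLogWeight (s : ℂ) : ℂ :=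
  ∑' n : ℕ, if 2 ≤ n then (n : ℂ) ^ (-(2 * s)) / (Real.log n : ℂ) else 0

namespace ZLW

open Complex LSeries MeasureTheory intervalIntegral Metric
open scoped Topology

noncomputable def F : ℕ → ℂ := fun n => if 2 ≤ n then (1 : ℂ) / (Real.log n) else 0

lemma term_eq (s : ℂ) (n : ℕ) :
    (if 2 ≤ n then (n : ℂ) ^ (-(2 * s)) / (Real.log n : ℂ) else 0) = LSeries.term F (2 * s) n := by
  rcases eq_or_ne n 0 with rfl | hn
  · simp [LSeries.term, F]
  rcases eq_or_ne n 1 with rfl | hn1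
  · simp [LSeries.term, F]
  have h2 : 2 ≤ n := by omega
  rw [LSeries.term_of_ne_zero hn]
  simp only [F, if_pos h2]
  rw [Complex.cpow_neg]
  ring

lemma absc : abscissaOfAbsConv F ≤ 1 := by
  apply abscissaOfAbsConv_le_of_le_const
  refine ⟨(Real.log 2)⁻¹, fun n hn => ?_⟩
  have hl2 : (0:ℝ) < Real.log 2 := Real.log_pos (by norm_num)
  by_cases h2 : 2 ≤ n
  · simp only [F, if_pos h2]
    rw [norm_div, norm_one]
    have hln : ‖((Real.log n : ℝ) : ℂ)‖ = Real.log n := by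
      rw [Complex.norm_real, Real.norm_eq_abs, _root_.abs_of_nonneg (Real.log_natCast_nonneg n)]
    rw [hln, one_div]
    apply inv_anti₀ hl2
    exact Real.log_le_log (by norm_num) (by exact_mod_cast h2)
  · simp only [F, if_neg h2]
    simp [inv_nonneg, hl2.le]

lemma two_mul_re {s : ℂ} (hs : 1/2 < s.re) : 1 < (2 * s).re := by
  simp only [Complex.mul_re, Complex.re_ofNat, Complex.im_ofNat, zero_mul, sub_zero]
  linarith

lemma absc_lt {w : ℂ} (hw : 1 < w.re) : abscissaOfAbsConv F < w.re :=
  lt_of_le_of_lt absc (by exact_mod_cast hw)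

lemma Fsummable {w : ℂ} (hw : 1 < w.re) : LSeriesSummable F w :=
  LSeriesSummable_of_abscissaOfAbsConv_lt_re (absc_lt hw)

lemma zlw_eq : zetaLogWeight = fun s => LSeries F (2 * s) := by
  funext s
  simp only [zetaLogWeight, LSeries]
  exact tsum_congr (term_eq s)

lemma summable_delta (w : ℂ) : LSeriesSummable (LSeries.delta) w := by
  unfold LSeriesSummable
  rw [funext (term_delta w)]
  exact ⟨1, hasSum_ite_eq 1 1⟩

lemma LlogMul {w : ℂ} (hw : 1 < w.re) : LSeries (logMul F) w = riemannZeta w - 1 := by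
  have hcongr : ∀ {n : ℕ}, n ≠ 0 → logMul F n = ((1 : ℕ → ℂ) - LSeries.delta) n := by
    intro n hn
    rcases eq_or_ne n 1 with rfl | hn1
    · simp [logMul, F, LSeries.delta]
    have h2 : 2 ≤ n := by omega
    have hlog : Real.log n ≠ 0 :=
      ne_of_gt (Real.log_pos (by exact_mod_cast by omega : (1:ℝ) < n))
    simp only [logMul, F, if_pos h2, Pi.sub_apply, Pi.one_apply, LSeries.delta, if_neg hn1,
      sub_zero]
    rw [← Complex.natCast_log, mul_one_div, div_self (by exact_mod_cast hlog)]
  rw [LSeries_congr hcongr w,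
    LSeries_sub (LSeriesSummable_one_iff.mpr hw) (summable_delta w),
    LSeries_one_eq_riemannZeta hw, LSeries_delta, Pi.one_apply]

lemma part2 {s : ℂ} (hs : 1/2 < s.re) :
    HasDerivAt zetaLogWeight (2 - 2 * riemannZeta (2 * s)) s := by
  have hw : 1 < (2 * s).re := two_mul_re hs
  have h1 : HasDerivAt (LSeries F) (-(LSeries (logMul F) (2 * s))) (2 * s) :=
    LSeries_hasDerivAt (absc_lt hw)
  have h2 : HasDerivAt (fun z : ℂ => 2 * z) 2 s := by
    simpa using (hasDerivAt_id s).const_mul (2:ℂ)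
  have h3 : HasDerivAt (fun z : ℂ => LSeries F (2 * z))
      (-(LSeries (logMul F) (2 * s)) * 2) s := h1.comp s h2
  rw [zlw_eq]
  have : (2 : ℂ) - 2 * riemannZeta (2 * s) = -(LSeries (logMul F) (2 * s)) * 2 := by
    rw [LlogMul hw]; ring
  rw [this]
  exact h3

lemma part1 {s : ℂ} (hs : 1/2 < s.re) :
    Summable (fun n : ℕ => if 2 ≤ n then (n : ℂ) ^ (-(2 * s)) / (Real.log n : ℂ) else 0) :=
  (Fsummable (two_mul_re hs)).congr fun n => (term_eq s n).symm


lemma exists_primitive (h : ℂ → ℂ) (hd : Differentiable ℂ h) :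
    ∃ Φ : ℂ → ℂ, ∀ s, HasDerivAt Φ (h s) s := by
  have hc : Continuous h := hd.continuous
  have hcd : Continuous (deriv h) := (hd.contDiff (n := 1)).continuous_deriv le_rfl
  refine ⟨fun s => ∫ t in (0:ℝ)..1, s * h (t * s), fun s₀ => ?_⟩
  -- bounds on the compact ball
  obtain ⟨C1, hC1⟩ : ∃ C, ∀ z ∈ closedBall (0:ℂ) (‖s₀‖ + 1), ‖h z‖ ≤ C :=
    (isCompact_closedBall _ _).exists_bound_of_continuousOn hc.continuousOn
  obtain ⟨C2, hC2⟩ : ∃ C, ∀ z ∈ closedBall (0:ℂ) (‖s₀‖ + 1), ‖deriv h z‖ ≤ C :=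
    (isCompact_closedBall _ _).exists_bound_of_continuousOn hcd.continuousOn
  have hr0 : (0:ℝ) ≤ ‖s₀‖ + 1 := by positivity
  have hC1n : 0 ≤ C1 := le_trans (norm_nonneg _) (hC1 0 (by simpa using hr0))
  have hC2n : 0 ≤ C2 := le_trans (norm_nonneg _) (hC2 0 (by simpa using hr0))
  have hmem : ∀ (t : ℝ), t ∈ Set.uIoc (0:ℝ) 1 → ∀ x ∈ ball s₀ 1,
      (t : ℂ) * x ∈ closedBall (0:ℂ) (‖s₀‖ + 1) := by
    intro t ht x hx
    rw [Set.uIoc_of_le zero_le_one] at ht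
    have hxn : ‖x‖ ≤ ‖s₀‖ + 1 := by
      have := mem_ball_iff_norm.mp hx
      calc ‖x‖ = ‖s₀ + (x - s₀)‖ := by ring_nf
        _ ≤ ‖s₀‖ + ‖x - s₀‖ := norm_add_le _ _
        _ ≤ ‖s₀‖ + 1 := by linarith [this]
    simp only [mem_closedBall, dist_zero_right, norm_mul, Complex.norm_real,
      Real.norm_eq_abs]
    calc |t| * ‖x‖ ≤ 1 * (‖s₀‖ + 1) := by
          apply mul_le_mul _ hxn (norm_nonneg _) zero_le_one
          rw [abs_of_pos ht.1]; exact ht.2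
      _ = ‖s₀‖ + 1 := one_mul _
  have key := intervalIntegral.hasDerivAt_integral_of_dominated_loc_of_deriv_le
      (F := fun (s : ℂ) (t : ℝ) => s * h (t * s))
      (F' := fun (s : ℂ) (t : ℝ) => h (t * s) + s * (deriv h (t * s) * t))
      (μ := volume) (a := 0) (b := 1) (x₀ := s₀)
      (bound := fun _ => C1 + (‖s₀‖ + 1) * C2) (s := ball s₀ 1) (ball_mem_nhds s₀ one_pos)
      ?_ ?_ ?_ ?_ ?_ ?_
  · -- conclude
    have hval : (∫ t in (0:ℝ)..1, (h (t * s₀) + s₀ * (deriv h (t * s₀) * t))) = h s₀ := by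
      have hψ : ∀ t ∈ Set.uIcc (0:ℝ) 1,
          HasDerivAt (fun t : ℝ => (t : ℂ) * h (t * s₀))
            (h (t * s₀) + s₀ * (deriv h (t * s₀) * t)) t := by
        intro t _
        have hz : HasDerivAt (fun z : ℂ => z * h (z * s₀))
            (1 * h ((t:ℂ) * s₀) + (t:ℂ) * (deriv h ((t:ℂ) * s₀) * s₀)) (t : ℂ) := by
          have hinner : HasDerivAt (fun z : ℂ => h (z * s₀))
              (deriv h ((t:ℂ) * s₀) * s₀) (t : ℂ) :=
            ((hd _).hasDerivAt).comp _ (by simpa using (hasDerivAt_id (t:ℂ)).mul_const s₀)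
          simpa using (hasDerivAt_id (t:ℂ)).fun_mul hinner
        have := hz.comp_ofReal
        convert this using 1
        ring
      rw [intervalIntegral.integral_eq_sub_of_hasDerivAt hψ ?_]
      · simp
      · apply Continuous.intervalIntegrable
        fun_prop
    rw [hval] at key
    exact key.2
  · -- measurability of F x
    filter_upwards with x
    apply Continuous.aestronglyMeasurable
    fun_prop
  · exact (by fun_prop : Continuous fun t : ℝ => s₀ * h (t * s₀)).intervalIntegrable _ _
  · apply Continuous.aestronglyMeasurable
    fun_prop
  · -- bound
    refine MeasureTheory.ae_of_all _ fun t ht x hx => ?_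
    have hmem' := hmem t ht x hx
    have hxn : ‖x‖ ≤ ‖s₀‖ + 1 := by
      have := mem_ball_iff_norm.mp hx
      calc ‖x‖ = ‖s₀ + (x - s₀)‖ := by ring_nf
        _ ≤ ‖s₀‖ + ‖x - s₀‖ := norm_add_le _ _
        _ ≤ ‖s₀‖ + 1 := by linarith [this]
    have ht1 : |t| ≤ 1 := by
      rw [Set.uIoc_of_le zero_le_one] at ht
      rw [abs_of_pos ht.1]; exact ht.2
    calc ‖h ((t:ℂ) * x) + x * (deriv h ((t:ℂ) * x) * (t:ℂ))‖
        ≤ ‖h ((t:ℂ) * x)‖ + ‖x * (deriv h ((t:ℂ) * x) * (t:ℂ))‖ := norm_add_le _ _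
      _ ≤ C1 + (‖s₀‖ + 1) * C2 := by
          gcongr
          · exact hC1 _ hmem'
          · rw [norm_mul, norm_mul]
            calc ‖x‖ * (‖deriv h ((t:ℂ) * x)‖ * ‖(t:ℂ)‖)
                ≤ (‖s₀‖ + 1) * (C2 * 1) := by
                  apply mul_le_mul hxn _ (by positivity) hr0
                  apply mul_le_mul (hC2 _ hmem') _ (norm_nonneg _) hC2n
                  simpa [Complex.norm_real] using ht1
              _ = (‖s₀‖ + 1) * C2 := by ring
  · exact intervalIntegrable_const
  · -- differentiability in s
    refine MeasureTheory.ae_of_all _ fun t ht x hx => ?_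
    have hinner : HasDerivAt (fun y : ℂ => h ((t:ℂ) * y)) (deriv h ((t:ℂ) * x) * (t:ℂ)) x :=
      ((hd _).hasDerivAt).comp _ (by simpa using (hasDerivAt_id x).const_mul (t:ℂ))
    simpa using (hasDerivAt_id x).fun_mul hinner


noncomputable def Hraw : ℂ → ℂ := fun w => riemannZeta w - 1 / (w - 1)

noncomputable def H : ℂ → ℂ := Function.update Hraw 1 (limUnder (𝓝[≠] 1) Hraw)

lemma H_eq {w : ℂ} (hw : w ≠ 1) : H w = riemannZeta w - 1 / (w - 1) := by
  rw [H, Function.update_of_ne hw, Hraw]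

lemma Hraw_diffOn : DifferentiableOn ℂ Hraw (Set.univ \ {1}) := by
  intro z hz
  have hz1 : z ≠ 1 := hz.2
  apply DifferentiableAt.differentiableWithinAt
  exact (differentiableAt_riemannZeta hz1).sub
    ((differentiableAt_const 1).div ((differentiableAt_id.sub (differentiableAt_const 1)))
      (sub_ne_zero.mpr hz1))

lemma H_diff : Differentiable ℂ H := by
  have ho : (fun z => Hraw z - Hraw 1) =o[𝓝[≠] (1:ℂ)] fun z => (z - 1)⁻¹ := by
    apply Filter.IsBoundedUnder.isLittleO_sub_self_inv
    have ht : Tendsto (fun z => Hraw z - Hraw 1) (𝓝[≠] (1:ℂ))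
        (𝓝 ((Real.eulerMascheroniConstant : ℂ) - Hraw 1)) :=
      Tendsto.sub_const tendsto_riemannZeta_sub_one_div _
    simpa [Function.comp_def] using ht.norm.isBoundedUnder_le
  have := Complex.differentiableOn_update_limUnder_of_isLittleO
    (Filter.univ_mem : Set.univ ∈ 𝓝 (1:ℂ)) Hraw_diffOn ho
  rw [differentiableOn_univ] at this
  exact this

lemma hEnt : Differentiable ℂ (fun s : ℂ => 2 - 2 * H (2 * s)) := by
  apply (differentiable_const (2:ℂ)).sub
  exact (H_diff.comp ((differentiable_id.const_mul 2))).const_mul 2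

lemma two_s_ne_one {s : ℂ} (hs : 1/2 < s.re) : 2 * s ≠ 1 := by
  intro hx
  have : (2 * s).re = 1 := by rw [hx]; simp
  simp only [Complex.mul_re, Complex.re_ofNat, Complex.im_ofNat, zero_mul, sub_zero] at this
  linarith

lemma two_s_sub_one_ne {s : ℂ} (hs : 1/2 < s.re) : 2 * s - 1 ≠ 0 :=
  sub_ne_zero.mpr (two_s_ne_one hs)

lemma part3 : ∃ f : ℂ → ℂ, Differentiable ℂ f ∧
    ∀ s : ℂ, 1 / 2 < s.re → zetaLogWeight s = -Complex.log (2 * s - 1) + f s := by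
  obtain ⟨Φ, hΦ⟩ := exists_primitive _ hEnt
  set u : ℂ → ℂ := fun s => zetaLogWeight s + Complex.log (2 * s - 1) - Φ s with hu
  have hV : IsOpen {s : ℂ | 1/2 < s.re} := isOpen_lt continuous_const Complex.continuous_re
  have hderiv : ∀ s ∈ {s : ℂ | 1/2 < s.re}, HasDerivAt u 0 s := by
    intro s hs
    have hs' : 1/2 < s.re := hs
    have h2s : (2 * s - 1) ∈ Complex.slitPlane := by
      rw [Complex.mem_slitPlane_iff]
      left
      simp only [Complex.sub_re, Complex.mul_re, Complex.re_ofNat, Complex.im_ofNat, zero_mul,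
        sub_zero, Complex.one_re]
      linarith
    have hlog : HasDerivAt (fun z : ℂ => Complex.log (2 * z - 1)) ((2 * s - 1)⁻¹ * 2) s := by
      apply (Complex.hasDerivAt_log h2s).comp (h := fun z : ℂ => 2 * z - 1) s
      simpa using ((hasDerivAt_id s).const_mul (2:ℂ)).sub_const 1
    have hcomb := ((part2 hs').add hlog).sub (hΦ s)
    have hval : 2 - 2 * riemannZeta (2 * s) + (2 * s - 1)⁻¹ * 2 - (2 - 2 * H (2 * s)) = 0 := by
      rw [H_eq (two_s_ne_one hs')]
      have hne := two_s_sub_one_ne hs'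
      field_simp
      ring
    rw [hval] at hcomb
    exact hcomb
  have hdiffOn : DifferentiableOn ℂ u {s : ℂ | 1/2 < s.re} :=
    fun s hs => ((hderiv s hs).differentiableAt).differentiableWithinAt
  have hfd : ∀ s ∈ {s : ℂ | 1/2 < s.re}, fderivWithin ℂ u {s : ℂ | 1/2 < s.re} s = 0 := by
    intro s hs
    have h0 : HasFDerivAt u (0 : ℂ →L[ℂ] ℂ) s := by
      have h1 := (hderiv s hs).hasFDerivAt
      have h2 : ContinuousLinearMap.toSpanSingleton ℂ (0:ℂ) = 0 := by
        ext1; simp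
      rwa [h2] at h1
    rw [fderivWithin_of_isOpen hV hs, h0.fderiv]
  have hconst : ∀ s ∈ {s : ℂ | 1/2 < s.re}, u s = u 1 := by
    intro s hs
    exact (convex_halfSpace_re_gt (1/2)).is_const_of_fderivWithin_eq_zero hdiffOn hfd hs
      (by norm_num [Set.mem_setOf_eq, Complex.one_re] : (1:ℂ) ∈ {s : ℂ | 1/2 < s.re})
  refine ⟨fun s => Φ s + u 1, ?_, fun s hs => ?_⟩
  · exact fun s => ((hΦ s).differentiableAt).add_const (u 1)
  · have h := hconst s hs
    simp only [hu] at h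
    linear_combination h


-- the real sequence parametrization
noncomputable def c : ℝ → ℂ := fun x => (x : ℂ)

lemma hc_tendsto : Tendsto c (𝓝[>] (1/2:ℝ)) (𝓝 (1/2 : ℂ)) := by
  have h : Tendsto c (𝓝 (1/2:ℝ)) (𝓝 (((1/2:ℝ)) : ℂ)) := Complex.continuous_ofReal.tendsto _
  have h2 : (((1/2:ℝ)) : ℂ) = (1/2 : ℂ) := by push_cast; ring
  rw [h2] at h
  exact h.mono_left nhdsWithin_le_nhds

lemma hc_ne : Tendsto c (𝓝[>] (1/2:ℝ)) (𝓝[≠] (1/2 : ℂ)) := by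
  apply tendsto_nhdsWithin_of_tendsto_nhds_of_eventually_within _ hc_tendsto
  filter_upwards [self_mem_nhdsWithin] with x hx
  simp only [Set.mem_compl_iff, Set.mem_singleton_iff]
  intro hEq
  have : x = 1/2 := by
    have := congrArg Complex.re hEq
    simpa [c] using this
  exact absurd this (ne_of_gt hx)

lemma re_c {x : ℝ} (hx : x ∈ Set.Ioi (1/2:ℝ)) : 1/2 < (c x).re := by
  simpa [c] using hx

lemma log_norm_eq : ∀ᶠ x in 𝓝[>] (1/2:ℝ),
    ‖Complex.log (2 * c x - 1)‖ = |Real.log (2 * x - 1)| := by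
  filter_upwards [self_mem_nhdsWithin] with x hx
  have hpos : (0:ℝ) < 2 * x - 1 := by simp only [Set.mem_Ioi] at hx; linarith
  have hcast : 2 * c x - 1 = ((2 * x - 1 : ℝ) : ℂ) := by simp only [c]; push_cast; ring
  rw [hcast, ← Complex.ofReal_log hpos.le, Complex.norm_real, Real.norm_eq_abs]

lemma tendsto_sub_half : Tendsto (fun x : ℝ => 2 * x - 1) (𝓝[>] (1/2:ℝ)) (𝓝[>] (0:ℝ)) := by
  apply tendsto_nhdsWithin_of_tendsto_nhds_of_eventually_within
  · have : Tendsto (fun x : ℝ => 2 * x - 1) (𝓝 (1/2:ℝ)) (𝓝 (2 * (1/2) - 1)) := by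
      apply Tendsto.sub_const
      exact (tendsto_id.const_mul 2)
    simpa using this.mono_left nhdsWithin_le_nhds
  · filter_upwards [self_mem_nhdsWithin] with x hx
    simp only [Set.mem_Ioi] at hx ⊢
    linarith

lemma hlog_norm : Tendsto (fun x => ‖Complex.log (2 * c x - 1)‖) (𝓝[>] (1/2:ℝ)) atTop := by
  apply Tendsto.congr' (log_norm_eq.mono fun x hx => hx.symm)
  exact tendsto_abs_atBot_atTop.comp
    (Real.tendsto_log_nhdsGT_zero.comp tendsto_sub_half)


-- (x-1/2)^m * log term → 0 for m ≥ 1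
lemma pow_log_zero {m : ℕ} (hm : 1 ≤ m) :
    Tendsto (fun x : ℝ => |x - 1/2| ^ m * |Real.log (2 * x - 1)|) (𝓝[>] (1/2:ℝ)) (𝓝 0) := by
  have hbig : Tendsto (fun x : ℝ => (2 * x - 1) * |Real.log (2 * x - 1)|)
      (𝓝[>] (1/2:ℝ)) (𝓝 0) := by
    have h1 : Tendsto (fun u : ℝ => u * |Real.log u|) (𝓝[>] (0:ℝ)) (𝓝 0) := by
      have h2 : Tendsto (fun u : ℝ => Real.log u * u ^ (1:ℝ)) (𝓝[>] (0:ℝ)) (𝓝 0) :=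
        tendsto_log_mul_rpow_nhdsGT_zero one_pos
    -- |u * log u| = |log u * u^1|, use abs and squeeze
      have h3 : Tendsto (fun u : ℝ => |Real.log u * u ^ (1:ℝ)|) (𝓝[>] (0:ℝ)) (𝓝 0) := by
        simpa using h2.abs
      apply h3.congr'
      filter_upwards [self_mem_nhdsWithin] with u hu
      have hu' : (0:ℝ) < u := hu
      rw [Real.rpow_one, abs_mul, abs_of_pos hu']
      ring
    exact h1.comp tendsto_sub_half
  have hsq : ∀ᶠ x in 𝓝[>] (1/2:ℝ),
      |x - 1/2| ^ m * |Real.log (2 * x - 1)| ≤ (2 * x - 1) * |Real.log (2 * x - 1)| := by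
    have hev : Set.Ioo (1/2:ℝ) 1 ∈ 𝓝[>] (1/2:ℝ) :=
      Ioo_mem_nhdsGT_of_mem (by norm_num)
    filter_upwards [hev] with x hx
    obtain ⟨hx1, hx2⟩ := hx
    have h0 : (0:ℝ) < x - 1/2 := by linarith
    have h1 : |x - 1/2| = x - 1/2 := abs_of_pos h0
    have hle : (x - 1/2) ^ m ≤ (x - 1/2) ^ 1 := by
      apply pow_le_pow_of_le_one h0.le (by linarith) hm
    rw [h1]
    apply mul_le_mul_of_nonneg_right _ (abs_nonneg _)
    calc (x - 1/2) ^ m ≤ (x - 1/2) ^ 1 := hle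
      _ = x - 1/2 := pow_one _
      _ ≤ 2 * x - 1 := by linarith
  have hnonneg : ∀ᶠ x in 𝓝[>] (1/2:ℝ),
      0 ≤ |x - 1/2| ^ m * |Real.log (2 * x - 1)| :=
    Eventually.of_forall fun x => by positivity
  exact squeeze_zero' hnonneg hsq hbig


lemma norm_c_sub_half : ∀ᶠ x in 𝓝[>] (1/2:ℝ), ‖c x - 1/2‖ = |x - 1/2| := by
  filter_upwards with x
  have : c x - 1/2 = ((x - 1/2 : ℝ) : ℂ) := by simp only [c]; push_cast; ring
  rw [this, Complex.norm_real, Real.norm_eq_abs]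

lemma part4 (f : ℂ → ℂ) (hf : Differentiable ℂ f)
    (hrep : ∀ s : ℂ, 1 / 2 < s.re → zetaLogWeight s = -Complex.log (2 * s - 1) + f s) :
    ¬ ∃ (U : Set ℂ) (g : ℂ → ℂ), IsOpen U ∧ (1 / 2 : ℂ) ∈ U ∧ MeromorphicOn g U ∧
      ∀ s ∈ U, 1 / 2 < s.re → g s = zetaLogWeight s := by
  rintro ⟨U, g, hU, hUmem, hg, hagree⟩
  set l : Filter ℝ := 𝓝[>] (1/2 : ℝ) with hl
  set R : ℝ → ℂ := fun x => -Complex.log (2 * c x - 1) + f (c x) with hR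
  have hev : ∀ᶠ x in l, g (c x) = R x := by
    filter_upwards [hc_tendsto.eventually (hU.mem_nhds hUmem), self_mem_nhdsWithin] with x hxU hx
    rw [hagree _ hxU (re_c hx), hrep _ (re_c hx)]
  have hf_lim : Tendsto (fun x => f (c x)) l (𝓝 (f (1/2))) :=
    (hf.continuous.tendsto _).comp hc_tendsto
  have hblow : Tendsto (fun x => ‖R x‖) l atTop := by
    have hub : ∀ᶠ x in l, ‖f (c x)‖ < ‖f (1/2 : ℂ)‖ + 1 :=
      hf_lim.norm.eventually_lt_const (by linarith)
    apply tendsto_atTop_mono'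
      (f₁ := fun x => ‖Complex.log (2 * c x - 1)‖ - (‖f (1/2:ℂ)‖ + 1)) l ?_ ?_
    · filter_upwards [hub] with x hx
      have h1 : ‖Complex.log (2 * c x - 1)‖ - ‖f (c x)‖ ≤ ‖R x‖ := by
        have h2 : ‖R x‖ = ‖f (c x) - Complex.log (2 * c x - 1)‖ := by
          simp only [hR]; congr 1; ring
        rw [h2, norm_sub_rev]
        exact norm_sub_norm_le _ _
      linarith
    · exact tendsto_atTop_add_const_right l _ hlog_norm
  have hmero : MeromorphicAt g (1/2) := hg _ hUmem
  rcases eq_or_ne (meromorphicOrderAt g (1/2)) ⊤ with hord | hord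
  · have h0 : ∀ᶠ z in 𝓝[≠] (1/2:ℂ), g z = 0 := meromorphicOrderAt_eq_top_iff.mp hord
    have hz : ∀ᶠ x in l, (0:ℝ) = ‖R x‖ := by
      filter_upwards [hc_ne.eventually h0, hev] with x h1 h2
      rw [← h2, h1, norm_zero]
    have hnorm0 : Tendsto (fun x => ‖R x‖) l (𝓝 0) := Tendsto.congr' hz tendsto_const_nhds
    exact (not_tendsto_atTop_of_tendsto_nhds hnorm0) hblow
  · obtain ⟨n, hn⟩ := WithTop.ne_top_iff_exists.mp hord
    obtain ⟨G, hG_an, hG_ne, hG_eq⟩ := (meromorphicOrderAt_eq_int_iff hmero).mp hn.symm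
    have hGc : Tendsto (fun x => G (c x)) l (𝓝 (G (1/2))) :=
      (hG_an.continuousAt.tendsto).comp hc_tendsto
    have hx_ne : ∀ᶠ x in l, (c x - 1/2 : ℂ) ≠ 0 := by
      filter_upwards [hc_ne.eventually self_mem_nhdsWithin] with x hx
      exact sub_ne_zero.mpr hx
    have hev2 : ∀ᶠ x in l, (c x - 1/2) ^ n * G (c x) = R x := by
      filter_upwards [hc_ne.eventually hG_eq, hev] with x h1 h2
      rw [← h2, h1, smul_eq_mul]
    rcases le_or_gt 0 n with hn0 | hn0
    · lift n to ℕ using hn0 with m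
      have hpow : Tendsto (fun x => (c x - 1/2) ^ ((m:ℕ):ℤ) * G (c x)) l
          (𝓝 ((1/2 - 1/2 : ℂ) ^ m * G (1/2))) := by
        simp_rw [zpow_natCast]
        exact ((hc_tendsto.sub_const _).pow m).mul hGc
      have hRlim : Tendsto R l (𝓝 ((1/2 - 1/2 : ℂ) ^ m * G (1/2))) :=
        Tendsto.congr' hev2 hpow
      exact (not_tendsto_atTop_of_tendsto_nhds hRlim.norm) hblow
    · set m : ℕ := (-n).toNat with hm
      have hmz : ((m:ℕ):ℤ) = -n := Int.toNat_of_nonneg (by omega)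
      have hm1 : 1 ≤ m := by
        have : (1:ℤ) ≤ ((m:ℕ):ℤ) := by rw [hmz]; omega
        exact_mod_cast this
      have hev3 : ∀ᶠ x in l, G (c x) = (c x - 1/2) ^ m * R x := by
        filter_upwards [hev2, hx_ne] with x h1 h2
        calc G (c x) = ((c x - 1/2) ^ ((m:ℕ):ℤ) * (c x - 1/2) ^ n) * G (c x) := by
              rw [← zpow_add₀ h2, hmz, neg_add_cancel, zpow_zero, one_mul]
          _ = (c x - 1/2) ^ m * R x := by
              rw [mul_assoc, h1, zpow_natCast]
      have hA : Tendsto (fun x => (c x - 1/2) ^ m * (-Complex.log (2 * c x - 1))) l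
          (𝓝 0) := by
        rw [tendsto_zero_iff_norm_tendsto_zero]
        have heq : ∀ᶠ x in l, |x - 1/2| ^ m * |Real.log (2 * x - 1)|
            = ‖(c x - 1/2) ^ m * (-Complex.log (2 * c x - 1))‖ := by
          filter_upwards [log_norm_eq, norm_c_sub_half] with x h1 h2
          rw [norm_mul, norm_neg, norm_pow, h1, h2]
        exact Tendsto.congr' heq (pow_log_zero hm1)
      have hB : Tendsto (fun x => (c x - 1/2) ^ m * f (c x)) l (𝓝 0) := by
        have h := ((hc_tendsto.sub_const (1/2:ℂ)).pow m).mul hf_lim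
        have hz : ((1/2 - 1/2 : ℂ)) ^ m * f (1/2) = 0 := by
          rw [sub_self, zero_pow (by omega : m ≠ 0), zero_mul]
        rwa [hz] at h
      have hlim0 : Tendsto (fun x => (c x - 1/2) ^ m * R x) l (𝓝 0) := by
        have h := hA.add hB
        rw [add_zero] at h
        apply h.congr
        intro x
        simp only [hR]
        ring
      have hG0 : G (1/2 : ℂ) = 0 :=
        tendsto_nhds_unique (Tendsto.congr' hev3 hGc) hlim0
      exact hG_ne hG0


end ZLW

/-- Non-meromorphic zeta function from a logarithmic weight: the Dirichlet series
`ζ_a(s) = ∑_{n≥2} n^{-2s} / log n` converges for `Re s > 1/2`, is holomorphic there with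
derivative `2 - 2 ζ_R(2s)` (where `ζ_R` is the Riemann zeta function); hence
`ζ_a(s) = -log(2s - 1) + f(s)` for an entire function `f`, and `ζ_a` admits no meromorphic
extension to any neighbourhood of `s = 1/2`. -/
theorem stmt_19 :
    (∀ s : ℂ, 1 / 2 < s.re →
      Summable (fun n : ℕ => if 2 ≤ n then (n : ℂ) ^ (-(2 * s)) / (Real.log n : ℂ) else 0)) ∧
    (∀ s : ℂ, 1 / 2 < s.re →
      HasDerivAt zetaLogWeight (2 - 2 * riemannZeta (2 * s)) s) ∧
    (∃ f : ℂ → ℂ, Differentiable ℂ f ∧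
      ∀ s : ℂ, 1 / 2 < s.re → zetaLogWeight s = -Complex.log (2 * s - 1) + f s) ∧
    (¬ ∃ (U : Set ℂ) (g : ℂ → ℂ), IsOpen U ∧ (1 / 2 : ℂ) ∈ U ∧ MeromorphicOn g U ∧
      ∀ s ∈ U, 1 / 2 < s.re → g s = zetaLogWeight s) := by
  obtain ⟨f, hf, hrep⟩ := ZLW.part3
  exact ⟨fun s hs => ZLW.part1 hs, fun s hs => ZLW.part2 hs, ⟨f, hf, hrep⟩,
    ZLW.part4 f hf hrep⟩
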